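/- Let b be the sequence defined by b(0)=4, b(1)=7, b(2)=12 and b(n)=2b(n-1)-b(n-2)+b(n-3) for n≥3. Then for all n≥2, b(n) = floor(b(n-1)^2/b(n-2) + 1/2). -/

import Mathlib

theorem stmt_0 (b : ℕ → ℤ)
    (h0 : b 0 = 4) (h1 : b 1 = 7) (h2 : b 2 = 12)
    (hrec : ∀ n, 3 ≤ n → b n = 2 * b (n-1) - b (n-2) + b (n-3)) :
    ∀ n, 2 ≤ n → b n = ⌊((b (n-1) : ℚ)^2 / (b (n-2) : ℚ)) + 1/2⌋ := by
  -- convenient form of the recurrence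
  have rec' : ∀ n : ℕ, b (n+3) = 2 * b (n+2) - b (n+1) + b n := by
    intro n
    exact hrec (n+3) (by omega)
  -- positivity and ratio bounds, by induction
  have key : ∀ n : ℕ, 0 < b n ∧ 0 < b (n+1) ∧ 0 < b (n+2) ∧
      12 * b n ≤ 7 * b (n+1) ∧ 12 * b (n+1) ≤ 7 * b (n+2) ∧
      5 * b (n+1) ≤ 9 * b n ∧ 5 * b (n+2) ≤ 9 * b (n+1) := by
    intro n
    induction n with
    | zero => norm_num [h0, h1, h2]
    | succ m ih =>
      obtain ⟨p0, p1, p2, r1, r2, u1, u2⟩ := ih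
      have e := rec' m
      refine ⟨p1, p2, by linarith, r2, by linarith, u2, by linarith⟩
  have pos : ∀ n, 0 < b n := fun n => (key n).1
  have ratio : ∀ n, 12 * b n ≤ 7 * b (n+1) := fun n => (key n).2.2.2.1
  have mono : ∀ n m : ℕ, n ≤ m → b n ≤ b m := by
    have step : ∀ n : ℕ, b n ≤ b (n+1) := by
      intro n
      have hr := ratio n
      have hp := pos n
      linarith
    intro n m h
    exact monotone_nat_of_le_succ step h
  -- the discriminant sequence
  set D : ℕ → ℤ := fun n => b (n+2) * b n - b (n+1)^2 with hD
  have Drec : ∀ n : ℕ, D (n+3) = D (n+2) - 2 * D (n+1) + D n := by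
    intro n
    have e3 := rec' n
    have e4 := rec' (n+1)
    have e5 := rec' (n+2)
    simp only [hD]
    rw [show n+3+2 = n+5 from by ring, show n+2+2 = n+4 from by ring,
        show n+1+2 = n+3 from by ring, show n+3+1 = n+4 from by ring,
        show n+2+1 = n+3 from by ring, show n+1+1 = n+2 from by ring]
    rw [show n+2+3 = n+5 from by ring, show n+2+2 = n+4 from by ring,
        show n+2+1 = n+3 from by ring] at e5
    rw [show n+1+3 = n+4 from by ring, show n+1+2 = n+3 from by ring,
        show n+1+1 = n+2 from by ring] at e4
    rw [e5, e4, e3]; ring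
  -- compute small values
  have b3 : b 3 = 21 := by have := rec' 0; norm_num at this; omega
  have b4 : b 4 = 37 := by have := rec' 1; norm_num at this; omega
  have b5 : b 5 = 65 := by have := rec' 2; norm_num at this; omega
  have b6 : b 6 = 114 := by have := rec' 3; norm_num at this; omega
  have b7 : b 7 = 200 := by have := rec' 4; norm_num at this; omega
  have b8 : b 8 = 351 := by have := rec' 5; norm_num at this; omega
  have b9 : b 9 = 616 := by have := rec' 6; norm_num at this; omega
  have b10 : b 10 = 1081 := by have := rec' 7; norm_num at this; omega
  have b11 : b 11 = 1897 := by have := rec' 8; norm_num at this; omega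
  have D0 : D 0 = -1 := by simp only [hD]; norm_num; rw [h0, h1, h2]; ring
  have D1 : D 1 = 3 := by simp only [hD]; norm_num; rw [h1, h2, b3]; ring
  have D2 : D 2 = 3 := by simp only [hD]; norm_num; rw [h2, b3, b4]; ring
  have D3 : D 3 = -4 := by simp only [hD]; norm_num; rw [b3, b4, b5]; ring
  have D4 : D 4 = -7 := by simp only [hD]; norm_num; rw [b4, b5, b6]; ring
  have D5 : D 5 = 4 := by simp only [hD]; norm_num; rw [b5, b6, b7]; ring
  have D6 : D 6 = 14 := by simp only [hD]; norm_num; rw [b6, b7, b8]; ring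
  have D7 : D 7 = -1 := by simp only [hD]; norm_num; rw [b7, b8, b9]; ring
  have D8 : D 8 = -25 := by simp only [hD]; norm_num; rw [b8, b9, b10]; ring
  have D9 : D 9 = -9 := by simp only [hD]; norm_num; rw [b9, b10, b11]; ring
  -- the main invariant, stepping by 4
  have inv : ∀ k : ℕ, 3 * |D (6+4*k)| ≤ b (6+4*k) ∧ 3 * |D (6+4*k+1)| ≤ b (6+4*k)
      ∧ 3 * |D (6+4*k+2)| ≤ b (6+4*k) ∧ 3 * |D (6+4*k+3)| ≤ b (6+4*k) := by
    intro k
    induction k with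
    | zero =>
      norm_num [D6, D7, D8, D9, b6]
    | succ m ih =>
      obtain ⟨i0, i1, i2, i3⟩ := ih
      set n := 6 + 4*m with hn
      have la1 := le_abs_self (D (n+1)); have lb1 := neg_abs_le (D (n+1))
      have la2 := le_abs_self (D (n+2)); have lb2 := neg_abs_le (D (n+2))
      have la3 := le_abs_self (D (n+3)); have lb3 := neg_abs_le (D (n+3))
      have r0 := ratio n; have r1 := ratio (n+1)
      have r2 := ratio (n+2); have r3 := ratio (n+3)
      rw [show n+1+1 = n+2 from by ring] at r1
      rw [show n+2+1 = n+3 from by ring] at r2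
      rw [show n+3+1 = n+4 from by ring] at r3
      have p4 := pos (n+4)
      have E1 := Drec (n+1)
      rw [show n+1+3 = n+4 from by ring, show n+1+2 = n+3 from by ring,
          show n+1+1 = n+2 from by ring] at E1
      have E2 := Drec (n+2)
      rw [show n+2+3 = n+5 from by ring, show n+2+2 = n+4 from by ring,
          show n+2+1 = n+3 from by ring] at E2
      have E3 := Drec (n+3)
      rw [show n+3+3 = n+6 from by ring, show n+3+2 = n+5 from by ring,
          show n+3+1 = n+4 from by ring] at E3
      have E4 := Drec (n+4)
      rw [show n+4+3 = n+7 from by ring, show n+4+2 = n+6 from by ring,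
          show n+4+1 = n+5 from by ring] at E4
      have g0 : 6+4*(m+1) = n+4 := by omega
      rw [g0, show n+4+1 = n+5 from by ring, show n+4+2 = n+6 from by ring,
          show n+4+3 = n+7 from by ring]
      refine ⟨?_, ?_, ?_, ?_⟩
      · rcases abs_cases (D (n+4)) with ⟨h, _⟩ | ⟨h, _⟩ <;> rw [h] <;> linarith
      · rcases abs_cases (D (n+5)) with ⟨h, _⟩ | ⟨h, _⟩ <;> rw [h] <;> linarith
      · rcases abs_cases (D (n+6)) with ⟨h, _⟩ | ⟨h, _⟩ <;> rw [h] <;> linarith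
      · rcases abs_cases (D (n+7)) with ⟨h, _⟩ | ⟨h, _⟩ <;> rw [h] <;> linarith
  -- 2|D m| < b m for all m
  have trick : ∀ x c : ℤ, 0 < c → 3 * |x| ≤ c → 2 * |x| < c := by
    intro x c hc h
    rcases (abs_nonneg x).lt_or_eq with h' | h'
    · linarith
    · rw [← h']; linarith
  have main : ∀ m : ℕ, 2 * |D m| < b m := by
    intro m
    by_cases hm : m ≤ 5
    · interval_cases m <;>
        simp only [D0, D1, D2, D3, D4, D5, h0, h1, h2, b3, b4, b5] <;> norm_num
    · push_neg at hm
      obtain ⟨k, j, hj, rfl⟩ : ∃ k j, j < 4 ∧ m = 6 + 4*k + j :=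
        ⟨(m-6)/4, (m-6)%4, by omega, by omega⟩
      have hmono : b (6+4*k) ≤ b (6+4*k+j) := mono _ _ (by omega)
      obtain ⟨i0, i1, i2, i3⟩ := inv k
      interval_cases j
      · exact trick _ _ (pos _) (le_trans i0 hmono)
      · exact trick _ _ (pos _) (le_trans i1 hmono)
      · exact trick _ _ (pos _) (le_trans i2 hmono)
      · exact trick _ _ (pos _) (le_trans i3 hmono)
  -- conclude
  intro n hn
  obtain ⟨m, rfl⟩ : ∃ m, n = m + 2 := ⟨n - 2, by omega⟩
  rw [show m + 2 - 1 = m + 1 from by omega, show m + 2 - 2 = m from by omega]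
  have hmain := main m
  have hDle : D m ≤ |D m| := le_abs_self _
  have hDge : -|D m| ≤ D m := neg_abs_le _
  have hlt : 2 * D m < b m := by linarith
  have hgt : -(b m) < 2 * D m := by linarith
  have hbm : (0:ℚ) < (b m : ℚ) := by exact_mod_cast pos m
  have hkey : ((b (m+1) : ℚ))^2 = (b (m+2) : ℚ) * (b m : ℚ) - ((D m : ℤ) : ℚ) := by
    have hDe : (D m : ℤ) = b (m+2) * b m - b (m+1)^2 := by simp only [hD]
    rw [hDe]
    push_cast
    ring
  have expand : ((b (m+1) : ℚ))^2 / (b m : ℚ) + 1/2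
      = (b (m+2) : ℚ) - ((D m : ℤ) : ℚ) / (b m : ℚ) + 1/2 := by
    rw [hkey]
    field_simp
  have hq1 : ((D m : ℤ) : ℚ) / (b m : ℚ) < 1/2 := by
    rw [div_lt_iff₀ hbm]
    have h2 : ((2 * D m : ℤ) : ℚ) < ((b m : ℤ) : ℚ) := by exact_mod_cast hlt
    push_cast at h2
    linarith
  have hq2 : -(1/2 : ℚ) < ((D m : ℤ) : ℚ) / (b m : ℚ) := by
    rw [lt_div_iff₀ hbm]
    have h2 : (-(b m : ℤ) : ℚ) < ((2 * D m : ℤ) : ℚ) := by exact_mod_cast hgt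
    push_cast at h2
    linarith
  symm
  rw [Int.floor_eq_iff, expand]
  constructor
  · linarith
  · push_cast
    linarith
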